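/- arXiv:2511.15219 — 5 statements merged into one kernel-verified Lean document; each statement's English description precedes it below -/
import Mathlib

section
/- Let V : {ρ>0}×ℝ² → ℝ be C¹, let η₁ (with parameter a₁) and η₂ (with parameter a₂) be admissible, and let ε₁, ε₂ : {ρ>0}×ℝ² → (0,∞) be continuous. Let (ρ,δ,γ) : [0,∞) → {ρ>0}×ℝ² be a solution of the polar unicycle with continuous controls v, ω such that |v(t)|/(ε₁ρ(t)) < a₁ and |ω(t)|/ε₂ < a₂ for all t ≥ 0 (ε₁, ε₂, ν₁, ν₂ evaluated along the trajectory), and suppose V(ρ(t),δ(t),γ(t)) → 0 as t → ∞. Then the cost J = ∫₀^∞ [ℓη₁(ε₁|ν₁|) + ℓη₂(ε₂|ν₂|) + η₁(|v|/(ε₁ρ)) + η₂(|ω|/ε₂)] dt satisfies J ≥ V(ρ(0),δ(0),γ(0)). -/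
/-!
STATEMENT 8: For any admissible η₁, η₂, continuous positive penalty weights
ε₁, ε₂, and any solution of the polar unicycle with saturating controls and
V → 0 along the trajectory, the cost
J = ∫₀^∞ [ℓη₁(ε₁|ν₁|) + ℓη₂(ε₂|ν₂|) + η₁(|v|/(ε₁ρ)) + η₂(|ω|/ε₂)] dt
satisfies J ≥ V(ρ(0),δ(0),γ(0)).
-/
noncomputable section

open Real Set Filter MeasureTheory

/-- The domain [0,a) for a ∈ (0,∞], encoded with a : EReal. -/
def domA (a : EReal) : Set ℝ := {r : ℝ | 0 ≤ r ∧ (r : EReal) < a}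

/-- The filter of real numbers tending to a from the left (r → a⁻);
for a = ⊤ this is the filter at infinity. -/
def leftLimA (a : EReal) : Filter ℝ :=
  Filter.comap (fun r : ℝ => (r : EReal)) (nhdsWithin a (Set.Iio a))

/-- η : [0,a) → [0,∞) is admissible with derivative η′ and inverse g = (η′)⁻¹. -/
structure IsAdmissible (a : EReal) (η η' g : ℝ → ℝ) : Prop where
  ha : 0 < a
  hasDeriv : ∀ r ∈ domA a, HasDerivWithinAt η (η' r) (domA a) r
  nonneg : ∀ r ∈ domA a, 0 ≤ η r
  zero : η 0 = 0
  mono : StrictMonoOn η (domA a)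
  tendsto : Tendsto η (leftLimA a) atTop
  dcont : ContinuousOn η' (domA a)
  dmono : StrictMonoOn η' (domA a)
  dzero : η' 0 = 0
  dtendsto : Tendsto η' (leftLimA a) atTop
  gmem : ∀ s : ℝ, 0 ≤ s → g s ∈ domA a
  gleft : ∀ r ∈ domA a, g (η' r) = r
  gright : ∀ s : ℝ, 0 ≤ s → η' (g s) = s

/-- Legendre–Fenchel transform ℓη(r) = ∫₀^r (η′)⁻¹(s) ds, with g = (η′)⁻¹. -/
def lfT (g : ℝ → ℝ) (r : ℝ) : ℝ := ∫ s in (0 : ℝ)..r, g s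

/-- The continuous linear map (u,w,x) ↦ aρ·u + aδ·w + aγ·x, the total derivative
of a function of (ρ,δ,γ) with partial derivatives (aρ,aδ,aγ). -/
def gradMap (aρ aδ aγ : ℝ) : (ℝ × ℝ × ℝ) →L[ℝ] ℝ :=
  aρ • ContinuousLinearMap.fst ℝ ℝ (ℝ × ℝ)
    + aδ • ((ContinuousLinearMap.fst ℝ ℝ ℝ).comp (ContinuousLinearMap.snd ℝ ℝ (ℝ × ℝ)))
    + aγ • ((ContinuousLinearMap.snd ℝ ℝ ℝ).comp (ContinuousLinearMap.snd ℝ ℝ (ℝ × ℝ)))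

/-- ν₁ = −(∂V/∂ρ) ρ cos γ + (∂V/∂δ + ∂V/∂γ) sin γ, built from the partial
derivatives Vρ, Vδ, Vγ of V at the state p = (ρ,δ,γ). -/
def nuOne (Vρ Vδ Vγ : ℝ × ℝ × ℝ → ℝ) (p : ℝ × ℝ × ℝ) : ℝ :=
  -(Vρ p) * p.1 * Real.cos p.2.2 + (Vδ p + Vγ p) * Real.sin p.2.2

/-- ν₂ = −∂V/∂γ. -/
def nuTwo (Vγ : ℝ × ℝ × ℝ → ℝ) (p : ℝ × ℝ × ℝ) : ℝ := -(Vγ p)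

namespace YoungAux

variable {a : EReal} {η η' g : ℝ → ℝ}

lemma domA_zero (h : IsAdmissible a η η' g) : (0:ℝ) ∈ domA a :=
  ⟨le_refl 0, by simpa using h.ha⟩

lemma domA_of_le {x y : ℝ} (hx : 0 ≤ x) (hxy : x ≤ y) (hy : y ∈ domA a) : x ∈ domA a :=
  ⟨hx, lt_of_le_of_lt (by exact_mod_cast hxy) hy.2⟩

lemma g_mono (h : IsAdmissible a η η' g) {s t : ℝ} (hs : 0 ≤ s) (hst : s ≤ t) :
    g s ≤ g t := by
  by_contra hlt
  push_neg at hlt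
  have ht : (0:ℝ) ≤ t := hs.trans hst
  have := h.dmono (h.gmem t ht) (h.gmem s hs) hlt
  rw [h.gright t ht, h.gright s hs] at this
  linarith

lemma g_zero (h : IsAdmissible a η η' g) : g 0 = 0 := by
  have := h.gleft 0 (domA_zero h)
  rwa [h.dzero] at this

lemma domA_mem_nhds (h : IsAdmissible a η η' g) {u : ℝ} (hu : u ∈ domA a) (hu0 : 0 < u) :
    domA a ∈ nhds u := by
  obtain ⟨x, hux, hxa⟩ := EReal.exists_between_coe_real hu.2
  have hux' : u < x := by exact_mod_cast hux
  refine Filter.mem_of_superset (Ioo_mem_nhds hu0 hux') ?_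
  intro z hz
  exact ⟨hz.1.le, lt_trans (by exact_mod_cast hz.2) hxa⟩

lemma eta_cont (h : IsAdmissible a η η' g) : ContinuousOn η (domA a) :=
  fun r hr => (h.hasDeriv r hr).continuousWithinAt

lemma Icc_subset_domA {x y : ℝ} (hx : x ∈ domA a) (hy : y ∈ domA a) :
    Icc x y ⊆ domA a := fun z hz => domA_of_le (hx.1.trans hz.1) hz.2 hy

lemma eta_integral (h : IsAdmissible a η η' g) {x y : ℝ} (hx : x ∈ domA a)
    (hy : y ∈ domA a) (hxy : x ≤ y) :
    ∫ u in x..y, η' u = η y - η x := by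
  have hIcc : Icc x y ⊆ domA a := Icc_subset_domA hx hy
  refine intervalIntegral.integral_eq_sub_of_hasDeriv_right_of_le hxy
    ((eta_cont h).mono hIcc) (fun u hu => ?_) ?_
  · have hu0 : 0 < u := lt_of_le_of_lt hx.1 hu.1
    have hud : u ∈ domA a := hIcc ⟨hu.1.le, hu.2.le⟩
    exact ((h.hasDeriv u hud).hasDerivAt (domA_mem_nhds h hud hu0)).hasDerivWithinAt
  · refine ContinuousOn.intervalIntegrable ?_
    rw [uIcc_of_le hxy]
    exact h.dcont.mono hIcc

lemma etad_intble (h : IsAdmissible a η η' g) {x y : ℝ} (hx : x ∈ domA a)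
    (hy : y ∈ domA a) (hxy : x ≤ y) : IntervalIntegrable η' volume x y := by
  refine ContinuousOn.intervalIntegrable ?_
  rw [uIcc_of_le hxy]
  exact h.dcont.mono (Icc_subset_domA hx hy)

lemma eta_lb (h : IsAdmissible a η η' g) {x y : ℝ} (hx : x ∈ domA a)
    (hy : y ∈ domA a) (hxy : x ≤ y) :
    η' x * (y - x) ≤ η y - η x := by
  rw [← eta_integral h hx hy hxy]
  have : η' x * (y - x) = ∫ _ in x..y, η' x := by
    rw [intervalIntegral.integral_const]; simp [smul_eq_mul]; ring
  rw [this]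
  refine intervalIntegral.integral_mono_on hxy intervalIntegrable_const
    (etad_intble h hx hy hxy) (fun u hu => ?_)
  exact h.dmono.monotoneOn hx (Icc_subset_domA hx hy hu) hu.1

lemma eta_ub (h : IsAdmissible a η η' g) {x y : ℝ} (hx : x ∈ domA a)
    (hy : y ∈ domA a) (hxy : x ≤ y) :
    η y - η x ≤ η' y * (y - x) := by
  rw [← eta_integral h hx hy hxy]
  have : η' y * (y - x) = ∫ _ in x..y, η' y := by
    rw [intervalIntegral.integral_const]; simp [smul_eq_mul]; ring
  rw [this]
  refine intervalIntegral.integral_mono_on hxy (etad_intble h hx hy hxy)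
    intervalIntegrable_const (fun u hu => ?_)
  exact h.dmono.monotoneOn (Icc_subset_domA hx hy hu) hy hu.2

lemma g_intble (h : IsAdmissible a η η' g) {s t : ℝ} (hs : 0 ≤ s) (hst : s ≤ t) :
    IntervalIntegrable g volume s t := by
  refine MonotoneOn.intervalIntegrable ?_
  rw [uIcc_of_le hst]
  intro x hx y hy hxy
  exact g_mono h (hs.trans hx.1) hxy

lemma lfT_sub (h : IsAdmissible a η η' g) {s t : ℝ} (hs : 0 ≤ s) (hst : s ≤ t) :
    lfT g t - lfT g s = ∫ u in s..t, g u := by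
  unfold lfT
  rw [← intervalIntegral.integral_add_adjacent_intervals (g_intble h le_rfl hs)
    (g_intble h hs hst)]
  ring

lemma lfT_step (h : IsAdmissible a η η' g) {s t : ℝ} (hs : 0 ≤ s) (hst : s ≤ t) :
    (t - s) * g s ≤ lfT g t - lfT g s := by
  rw [lfT_sub h hs hst]
  have : (t - s) * g s = ∫ _ in s..t, g s := by
    rw [intervalIntegral.integral_const]; simp [smul_eq_mul]
  rw [this]
  exact intervalIntegral.integral_mono_on hst intervalIntegrable_const
    (g_intble h hs hst) (fun u hu => g_mono h hs hu.1)

lemma lfT_nonneg (h : IsAdmissible a η η' g) {s : ℝ} (hs : 0 ≤ s) : 0 ≤ lfT g s := by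
  unfold lfT
  refine intervalIntegral.integral_nonneg hs (fun u hu => ?_)
  exact (h.gmem u hu.1).1

lemma lfT_zero : lfT g 0 = 0 := intervalIntegral.integral_same

/-- Φ step inequality. -/
lemma phi_step (h : IsAdmissible a η η' g) {s t : ℝ} (hs : 0 ≤ s) (hst : s ≤ t) :
    (lfT g s - s * g s + η (g s)) - (g t - g s) * (t - s)
      ≤ lfT g t - t * g t + η (g t) := by
  have h1 := lfT_step h hs hst
  have ht : 0 ≤ t := hs.trans hst
  have hgs := h.gmem s hs
  have hgt := h.gmem t ht
  have hg : g s ≤ g t := g_mono h hs hst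
  have h2 := eta_lb h hgs hgt hg
  rw [h.gright s hs] at h2
  nlinarith [h2, h1]

lemma phi_nonneg (h : IsAdmissible a η η' g) {s : ℝ} (hs : 0 ≤ s) :
    0 ≤ lfT g s - s * g s + η (g s) := by
  have key : ∀ n : ℕ, 1 ≤ n → -(g s * (s / n)) ≤ lfT g s - s * g s + η (g s) := by
    intro n hn
    set hstep : ℝ := s / n with hdef
    have hstep0 : 0 ≤ hstep := div_nonneg hs (Nat.cast_nonneg n)
    have claim : ∀ k : ℕ, k ≤ n →
        -(g (k * hstep) * hstep) ≤ lfT g (k * hstep) - (k * hstep) * g (k * hstep)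
          + η (g (k * hstep)) := by
      intro k
      induction k with
      | zero =>
        intro _
        simp [lfT_zero, g_zero h, h.zero]
      | succ k ih =>
        intro hk1
        have hk := ih (Nat.le_of_succ_le hk1)
        have hk0 : (0:ℝ) ≤ k * hstep := mul_nonneg (Nat.cast_nonneg k) hstep0
        have hle : (k:ℝ) * hstep ≤ (k+1 : ℕ) * hstep := by
          push_cast; nlinarith
        have hst := phi_step h hk0 hle
        have hgm : g ((k:ℝ) * hstep) ≤ g (((k+1 : ℕ) : ℝ) * hstep) := by
          exact g_mono h hk0 hle
        have hdiff : ((k+1:ℕ):ℝ) * hstep - (k:ℝ)*hstep = hstep := by push_cast; ring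
        push_cast at hst hgm hdiff ⊢
        nlinarith [hst, hgm]
    have := claim n le_rfl
    have hns : (n:ℝ) * hstep = s := by
      rw [hdef]
      field_simp
    rw [hns] at this
    exact this
  have htend : Tendsto (fun n : ℕ => -(g s * (s / n))) atTop (nhds 0) := by
    have h1 : Tendsto (fun n : ℕ => (s / n)) atTop (nhds 0) :=
      tendsto_const_div_atTop_nhds_zero_nat s
    have := (h1.const_mul (g s)).neg
    simpa using this
  refine le_of_tendsto htend ?_
  filter_upwards [eventually_ge_atTop 1] with n hn using key n hn

/-- Fenchel–Young inequality. -/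
lemma young (h : IsAdmissible a η η' g) {s r : ℝ} (hs : 0 ≤ s) (hr : r ∈ domA a) :
    s * r ≤ lfT g s + η r := by
  have hgs := h.gmem s hs
  have hmin : η (g s) - s * g s ≤ η r - s * r := by
    rcases le_total (g s) r with hc | hc
    · have := eta_lb h hgs hr hc
      rw [h.gright s hs] at this
      linarith
    · have := eta_ub h hr hgs hc
      rw [h.gright s hs] at this
      linarith
  have := phi_nonneg h hs
  linarith

end YoungAux

lemma gradMap_apply (aρ aδ aγ : ℝ) (u : ℝ × ℝ × ℝ) :
    gradMap aρ aδ aγ u = aρ * u.1 + aδ * u.2.1 + aγ * u.2.2 := by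
  simp [gradMap]

open YoungAux in
theorem inverse_optimal_cost_lower_bound
    (V Vρ Vδ Vγ ε₁ ε₂ : ℝ × ℝ × ℝ → ℝ)
    (a₁ a₂ : EReal) (η₁ η₁' g₁ η₂ η₂' g₂ : ℝ → ℝ)
    (hadm₁ : IsAdmissible a₁ η₁ η₁' g₁) (hadm₂ : IsAdmissible a₂ η₂ η₂' g₂)
    -- V is C¹ on {ρ > 0} × ℝ² with partial derivatives Vρ, Vδ, Vγ
    (hV : ∀ p : ℝ × ℝ × ℝ, 0 < p.1 → HasFDerivAt V (gradMap (Vρ p) (Vδ p) (Vγ p)) p)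
    (hVρc : ContinuousOn Vρ {p : ℝ × ℝ × ℝ | 0 < p.1})
    (hVδc : ContinuousOn Vδ {p : ℝ × ℝ × ℝ | 0 < p.1})
    (hVγc : ContinuousOn Vγ {p : ℝ × ℝ × ℝ | 0 < p.1})
    -- ε₁, ε₂ are continuous and positive on {ρ > 0} × ℝ²
    (hε₁c : ContinuousOn ε₁ {p : ℝ × ℝ × ℝ | 0 < p.1})
    (hε₂c : ContinuousOn ε₂ {p : ℝ × ℝ × ℝ | 0 < p.1})
    (hε₁pos : ∀ p : ℝ × ℝ × ℝ, 0 < p.1 → 0 < ε₁ p)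
    (hε₂pos : ∀ p : ℝ × ℝ × ℝ, 0 < p.1 → 0 < ε₂ p)
    -- the trajectory: a solution of the polar unicycle on [0,∞) with continuous controls
    (ρ δ γ v ω : ℝ → ℝ)
    (hρpos : ∀ t ∈ Set.Ici (0 : ℝ), 0 < ρ t)
    (hvc : ContinuousOn v (Set.Ici (0 : ℝ))) (hωc : ContinuousOn ω (Set.Ici (0 : ℝ)))
    (hρ : ∀ t ∈ Set.Ici (0 : ℝ), HasDerivAt ρ (-(v t) * Real.cos (γ t)) t)
    (hδ : ∀ t ∈ Set.Ici (0 : ℝ), HasDerivAt δ ((v t / ρ t) * Real.sin (γ t)) t)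
    (hγ : ∀ t ∈ Set.Ici (0 : ℝ),
      HasDerivAt γ ((v t / ρ t) * Real.sin (γ t) - ω t) t)
    -- the weighted controls stay within the domains of η₁, η₂
    (hsat₁ : ∀ t ∈ Set.Ici (0 : ℝ),
      ((|v t| / (ε₁ (ρ t, δ t, γ t) * ρ t) : ℝ) : EReal) < a₁)
    (hsat₂ : ∀ t ∈ Set.Ici (0 : ℝ),
      ((|ω t| / ε₂ (ρ t, δ t, γ t) : ℝ) : EReal) < a₂)
    -- V converges to zero along the trajectory
    (hlim : Tendsto (fun t => V (ρ t, δ t, γ t)) atTop (nhds 0)) :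
    ENNReal.ofReal (V (ρ 0, δ 0, γ 0))
      ≤ ∫⁻ t in Set.Ici (0 : ℝ),
          ENNReal.ofReal
            (lfT g₁ (ε₁ (ρ t, δ t, γ t) * |nuOne Vρ Vδ Vγ (ρ t, δ t, γ t)|)
              + lfT g₂ (ε₂ (ρ t, δ t, γ t) * |nuTwo Vγ (ρ t, δ t, γ t)|)
              + η₁ (|v t| / (ε₁ (ρ t, δ t, γ t) * ρ t))
              + η₂ (|ω t| / ε₂ (ρ t, δ t, γ t))) := by
  set F : ℝ → ℝ := fun t =>
      lfT g₁ (ε₁ (ρ t, δ t, γ t) * |nuOne Vρ Vδ Vγ (ρ t, δ t, γ t)|)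
        + lfT g₂ (ε₂ (ρ t, δ t, γ t) * |nuTwo Vγ (ρ t, δ t, γ t)|)
        + η₁ (|v t| / (ε₁ (ρ t, δ t, γ t) * ρ t))
        + η₂ (|ω t| / ε₂ (ρ t, δ t, γ t)) with hF
  set D : ℝ → ℝ := fun t =>
      Vρ (ρ t, δ t, γ t) * (-(v t) * Real.cos (γ t))
        + Vδ (ρ t, δ t, γ t) * ((v t / ρ t) * Real.sin (γ t))
        + Vγ (ρ t, δ t, γ t) * ((v t / ρ t) * Real.sin (γ t) - ω t) with hD
  -- continuity of the trajectory
  have hρc : ContinuousOn ρ (Ici 0) := fun t ht => (hρ t ht).continuousAt.continuousWithinAt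
  have hδc : ContinuousOn δ (Ici 0) := fun t ht => (hδ t ht).continuousAt.continuousWithinAt
  have hγc : ContinuousOn γ (Ici 0) := fun t ht => (hγ t ht).continuousAt.continuousWithinAt
  have hqc : ContinuousOn (fun t => (ρ t, δ t, γ t)) (Ici 0) := hρc.prodMk (hδc.prodMk hγc)
  have hqmem : ∀ t ∈ Ici (0:ℝ), (ρ t, δ t, γ t) ∈ {p : ℝ × ℝ × ℝ | 0 < p.1} :=
    fun t ht => hρpos t ht
  have hVγq : ContinuousOn (fun t => Vγ (ρ t, δ t, γ t)) (Ici 0) := hVγc.comp hqc hqmem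
  have hVρq : ContinuousOn (fun t => Vρ (ρ t, δ t, γ t)) (Ici 0) := hVρc.comp hqc hqmem
  have hVδq : ContinuousOn (fun t => Vδ (ρ t, δ t, γ t)) (Ici 0) := hVδc.comp hqc hqmem
  have hvρ : ContinuousOn (fun t => v t / ρ t) (Ici 0) :=
    hvc.div hρc (fun t ht => (hρpos t ht).ne')
  have hsinγ : ContinuousOn (fun t => Real.sin (γ t)) (Ici 0) :=
    Real.continuous_sin.comp_continuousOn hγc
  have hcosγ : ContinuousOn (fun t => Real.cos (γ t)) (Ici 0) :=
    Real.continuous_cos.comp_continuousOn hγc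
  have hDcont : ContinuousOn D (Ici 0) := by
    rw [hD]
    exact ((hVρq.mul (hvc.neg.mul hcosγ)).add
      (hVδq.mul (hvρ.mul hsinγ))).add (hVγq.mul ((hvρ.mul hsinγ).sub hωc))
  -- derivative of V along the trajectory
  have hDder : ∀ t ∈ Ici (0:ℝ), HasDerivAt (fun τ => V (ρ τ, δ τ, γ τ)) (D t) t := by
    intro t ht
    have hq' : HasDerivAt (fun τ => (ρ τ, δ τ, γ τ))
        (-(v t) * Real.cos (γ t), (v t / ρ t) * Real.sin (γ t),
          (v t / ρ t) * Real.sin (γ t) - ω t) t :=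
      (hρ t ht).prodMk ((hδ t ht).prodMk (hγ t ht))
    have := (hV (ρ t, δ t, γ t) (hρpos t ht)).comp_hasDerivAt t hq'
    exact this.congr_deriv (by simp only [gradMap_apply, hD])
  -- pointwise bound
  have hpt : ∀ t ∈ Ici (0:ℝ), -D t ≤ F t := by
    intro t ht
    have hρt := hρpos t ht
    have hε1 := hε₁pos (ρ t, δ t, γ t) hρt
    have hε2 := hε₂pos (ρ t, δ t, γ t) hρt
    have hDval : D t = nuOne Vρ Vδ Vγ (ρ t, δ t, γ t) * (v t / ρ t)
        + nuTwo Vγ (ρ t, δ t, γ t) * ω t := by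
      rw [hD]; simp only [nuOne, nuTwo]
      field_simp
      ring
    have hr₁ : |v t| / (ε₁ (ρ t, δ t, γ t) * ρ t) ∈ domA a₁ :=
      ⟨div_nonneg (abs_nonneg _) (mul_pos hε1 hρt).le, hsat₁ t ht⟩
    have hr₂ : |ω t| / ε₂ (ρ t, δ t, γ t) ∈ domA a₂ :=
      ⟨div_nonneg (abs_nonneg _) hε2.le, hsat₂ t ht⟩
    have hy1 := young hadm₁ (mul_nonneg hε1.le (abs_nonneg (nuOne Vρ Vδ Vγ (ρ t, δ t, γ t)))) hr₁
    have hy2 := young hadm₂ (mul_nonneg hε2.le (abs_nonneg (nuTwo Vγ (ρ t, δ t, γ t)))) hr₂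
    have e1 : (ε₁ (ρ t, δ t, γ t) * |nuOne Vρ Vδ Vγ (ρ t, δ t, γ t)|)
        * (|v t| / (ε₁ (ρ t, δ t, γ t) * ρ t))
        = |nuOne Vρ Vδ Vγ (ρ t, δ t, γ t)| * (|v t| / ρ t) := by
      field_simp
    have e2 : (ε₂ (ρ t, δ t, γ t) * |nuTwo Vγ (ρ t, δ t, γ t)|)
        * (|ω t| / ε₂ (ρ t, δ t, γ t)) = |nuTwo Vγ (ρ t, δ t, γ t)| * |ω t| := by
      field_simp
    have habs : -D t ≤ |nuOne Vρ Vδ Vγ (ρ t, δ t, γ t)| * (|v t| / ρ t)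
        + |nuTwo Vγ (ρ t, δ t, γ t)| * |ω t| := by
      calc -D t ≤ |D t| := neg_le_abs _
        _ ≤ |nuOne Vρ Vδ Vγ (ρ t, δ t, γ t) * (v t / ρ t)|
            + |nuTwo Vγ (ρ t, δ t, γ t) * ω t| := by rw [hDval]; exact abs_add_le _ _
        _ = |nuOne Vρ Vδ Vγ (ρ t, δ t, γ t)| * (|v t| / ρ t)
            + |nuTwo Vγ (ρ t, δ t, γ t)| * |ω t| := by
          rw [abs_mul, abs_mul, abs_div, abs_of_pos hρt]
    rw [hF]
    simp only
    rw [← e1] at habs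
    rw [← e2] at habs
    linarith
  have hFnn : ∀ t ∈ Ici (0:ℝ), 0 ≤ F t := by
    intro t ht
    have hρt := hρpos t ht
    have hε1 := hε₁pos (ρ t, δ t, γ t) hρt
    have hε2 := hε₂pos (ρ t, δ t, γ t) hρt
    have hr₁ : |v t| / (ε₁ (ρ t, δ t, γ t) * ρ t) ∈ domA a₁ :=
      ⟨div_nonneg (abs_nonneg _) (mul_pos hε1 hρt).le, hsat₁ t ht⟩
    have hr₂ : |ω t| / ε₂ (ρ t, δ t, γ t) ∈ domA a₂ :=
      ⟨div_nonneg (abs_nonneg _) hε2.le, hsat₂ t ht⟩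
    have h1 := lfT_nonneg hadm₁ (mul_nonneg hε1.le (abs_nonneg (nuOne Vρ Vδ Vγ (ρ t, δ t, γ t))))
    have h2 := lfT_nonneg hadm₂ (mul_nonneg hε2.le (abs_nonneg (nuTwo Vγ (ρ t, δ t, γ t))))
    have h3 := hadm₁.nonneg _ hr₁
    have h4 := hadm₂.nonneg _ hr₂
    rw [hF]; simp only; linarith
  -- key estimate for each T
  have key : ∀ T : ℝ, 0 ≤ T →
      ENNReal.ofReal (V (ρ 0, δ 0, γ 0) - V (ρ T, δ T, γ T))
        ≤ ∫⁻ t in Set.Ici (0:ℝ), ENNReal.ofReal (F t) := by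
    intro T hT
    have hIcc : Icc (0:ℝ) T ⊆ Ici 0 := fun x hx => hx.1
    have hDint : IntervalIntegrable D volume 0 T := by
      refine ContinuousOn.intervalIntegrable ?_
      rw [uIcc_of_le hT]; exact hDcont.mono hIcc
    have hftc : ∫ t in (0:ℝ)..T, D t = V (ρ T, δ T, γ T) - V (ρ 0, δ 0, γ 0) := by
      refine intervalIntegral.integral_eq_sub_of_hasDerivAt
        (f := fun t => V (ρ t, δ t, γ t)) (fun t ht => ?_) hDint
      rw [uIcc_of_le hT] at ht
      exact hDder t (hIcc ht)
    set G : ℝ → ℝ := fun t => max (-D t) 0 with hG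
    have hGcont : ContinuousOn G (Icc 0 T) := by
      rw [hG]; exact ((hDcont.mono hIcc).neg).sup continuousOn_const
    have hGint : IntervalIntegrable G volume 0 T := by
      refine ContinuousOn.intervalIntegrable ?_
      rw [uIcc_of_le hT]; exact hGcont
    have hmono : ∫ t in (0:ℝ)..T, -D t ≤ ∫ t in (0:ℝ)..T, G t :=
      intervalIntegral.integral_mono_on hT hDint.neg hGint
        (fun x _ => le_max_left _ _)
    have h1 : V (ρ 0, δ 0, γ 0) - V (ρ T, δ T, γ T) = ∫ t in (0:ℝ)..T, -D t := by
      rw [intervalIntegral.integral_neg, hftc]; ring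
    have hGIoc : IntegrableOn G (Ioc 0 T) volume :=
      (hGcont.integrableOn_Icc).mono_set Ioc_subset_Icc_self
    have h3 : ENNReal.ofReal (∫ t in Ioc (0:ℝ) T, G t)
        = ∫⁻ t in Ioc (0:ℝ) T, ENNReal.ofReal (G t) :=
      MeasureTheory.ofReal_integral_eq_lintegral_ofReal hGIoc
        (Filter.Eventually.of_forall (fun t => le_max_right _ _))
    have h4 : ∫⁻ t in Ioc (0:ℝ) T, ENNReal.ofReal (G t)
        ≤ ∫⁻ t in Ioc (0:ℝ) T, ENNReal.ofReal (F t) := by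
      refine lintegral_mono_ae ((ae_restrict_iff' measurableSet_Ioc).2
        (Filter.Eventually.of_forall (fun t ht => ?_)))
      have ht' : t ∈ Ici (0:ℝ) := le_of_lt ht.1
      refine ENNReal.ofReal_le_ofReal (max_le (hpt t ht') (hFnn t ht'))
    have h5 : ∫⁻ t in Ioc (0:ℝ) T, ENNReal.ofReal (F t)
        ≤ ∫⁻ t in Set.Ici (0:ℝ), ENNReal.ofReal (F t) :=
      lintegral_mono_set (fun x hx => le_of_lt hx.1)
    calc ENNReal.ofReal (V (ρ 0, δ 0, γ 0) - V (ρ T, δ T, γ T))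
        ≤ ENNReal.ofReal (∫ t in (0:ℝ)..T, G t) := by
          rw [h1]; exact ENNReal.ofReal_le_ofReal hmono
      _ = ENNReal.ofReal (∫ t in Ioc (0:ℝ) T, G t) := by
          rw [intervalIntegral.integral_of_le hT]
      _ = ∫⁻ t in Ioc (0:ℝ) T, ENNReal.ofReal (G t) := h3
      _ ≤ ∫⁻ t in Ioc (0:ℝ) T, ENNReal.ofReal (F t) := h4
      _ ≤ ∫⁻ t in Set.Ici (0:ℝ), ENNReal.ofReal (F t) := h5
  -- pass to the limit
  have htt : Tendsto (fun T => ENNReal.ofReal (V (ρ 0, δ 0, γ 0) - V (ρ T, δ T, γ T)))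
      atTop (nhds (ENNReal.ofReal (V (ρ 0, δ 0, γ 0)))) := by
    have h0 : Tendsto (fun T => V (ρ 0, δ 0, γ 0) - V (ρ T, δ T, γ T)) atTop
        (nhds (V (ρ 0, δ 0, γ 0) - 0)) := tendsto_const_nhds.sub hlim
    rw [sub_zero] at h0
    exact (ENNReal.continuous_ofReal.tendsto _).comp h0
  refine le_of_tendsto htt ?_
  filter_upwards [eventually_ge_atTop (0:ℝ)] with T hT using key T hT

end
end

section
/- Let k₁, k₂, k₃ > 0 and define on ℝ³ the composite Lyapunov function V(ρ,δ,γ) = √(1 + k₁ρ²) + √(1 + δ² + k₃(γ + (1/2)arctan(2k₂δ))²) − 2. Define ν₁ = −(∂V/∂ρ) ρ cos γ + (∂V/∂δ + ∂V/∂γ) sin γ and ν₂ = −∂V/∂γ. Then: (i) V(0,0,0) = 0 and V(ρ,δ,γ) > 0 for every (ρ,δ,γ) ≠ (0,0,0); and (ii) for every (ρ,δ,γ) with ρ ≥ 0, if ν₁(ρ,δ,γ) = 0 and ν₂(ρ,δ,γ) = 0, then ρ = 0, δ = 0 and γ = 0. (This is the strictness property making V a strict control Lyapunov function for the driftless polar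 unicycle with respect to the inputs (v/ρ, ω).) -/
/-!
STATEMENT 10: The composite Lyapunov function
V(ρ,δ,γ) = √(1 + k₁ρ²) + √(1 + δ² + k₃(γ + (1/2)arctan(2k₂δ))²) − 2
is positive definite on ℝ³, and the Lie-derivative expressions
ν₁ = −(∂V/∂ρ) ρ cos γ + (∂V/∂δ + ∂V/∂γ) sin γ, ν₂ = −∂V/∂γ
vanish simultaneously (for ρ ≥ 0) only at the origin.
-/

noncomputable section

open Real

/-- The composite Lyapunov function of Corollary 1. -/
def Vcomp (k₁ k₂ k₃ ρ δ γ : ℝ) : ℝ :=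
  Real.sqrt (1 + k₁ * ρ ^ 2)
    + Real.sqrt (1 + (δ ^ 2 + k₃ * (γ + (1 / 2) * Real.arctan (2 * k₂ * δ)) ^ 2))
    - 2

/-- ν₁ = −(∂V/∂ρ) ρ cos γ + (∂V/∂δ + ∂V/∂γ) sin γ, with the partial derivatives
of `Vcomp` expressed via `deriv` of its one-variable sections. -/
def nu₁comp (k₁ k₂ k₃ ρ δ γ : ℝ) : ℝ :=
  -(deriv (fun r => Vcomp k₁ k₂ k₃ r δ γ) ρ) * ρ * Real.cos γ
    + (deriv (fun d => Vcomp k₁ k₂ k₃ ρ d γ) δ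
        + deriv (fun g => Vcomp k₁ k₂ k₃ ρ δ g) γ) * Real.sin γ

/-- ν₂ = −∂V/∂γ. -/
def nu₂comp (k₁ k₂ k₃ ρ δ γ : ℝ) : ℝ :=
  -(deriv (fun g => Vcomp k₁ k₂ k₃ ρ δ g) γ)

lemma hasDerivAt_rho_section (k₁ k₂ k₃ δ γ ρ : ℝ) (h : (1 : ℝ) + k₁ * ρ ^ 2 ≠ 0) :
    HasDerivAt (fun r => Vcomp k₁ k₂ k₃ r δ γ)
      (k₁ * (2 * ρ) / (2 * Real.sqrt (1 + k₁ * ρ ^ 2))) ρ := by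
  have h1 : HasDerivAt (fun r : ℝ => 1 + k₁ * r ^ 2) (k₁ * (2 * ρ)) ρ := by
    have := ((hasDerivAt_pow 2 ρ).const_mul k₁).const_add 1
    simpa using this
  have h2 := h1.sqrt h
  simpa [Vcomp] using (h2.add_const (Real.sqrt (1 + (δ ^ 2 + k₃ * (γ + (1 / 2) * Real.arctan (2 * k₂ * δ)) ^ 2)))).sub_const 2

lemma hasDerivAt_gamma_section (k₁ k₂ k₃ ρ δ γ : ℝ)
    (h : (1 : ℝ) + (δ ^ 2 + k₃ * (γ + (1 / 2) * Real.arctan (2 * k₂ * δ)) ^ 2) ≠ 0) :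
    HasDerivAt (fun g => Vcomp k₁ k₂ k₃ ρ δ g)
      (k₃ * (2 * (γ + (1 / 2) * Real.arctan (2 * k₂ * δ)))
        / (2 * Real.sqrt (1 + (δ ^ 2 + k₃ * (γ + (1 / 2) * Real.arctan (2 * k₂ * δ)) ^ 2)))) γ := by
  have h1 : HasDerivAt
      (fun g : ℝ => 1 + (δ ^ 2 + k₃ * (g + (1 / 2) * Real.arctan (2 * k₂ * δ)) ^ 2))
      (k₃ * (2 * (γ + (1 / 2) * Real.arctan (2 * k₂ * δ)))) γ := by
    have hb := (((hasDerivAt_id γ).add_const ((1 / 2) * Real.arctan (2 * k₂ * δ))).fun_pow 2).const_mul k₃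
    have := (hb.const_add (δ ^ 2)).const_add 1
    refine this.congr_deriv ?_
    try simp only [id_eq]
    push_cast
    ring
  have h2 := h1.sqrt h
  have := (h2.const_add (Real.sqrt (1 + k₁ * ρ ^ 2))).sub_const 2
  simpa [Vcomp] using this

lemma hasDerivAt_delta_section (k₁ k₂ k₃ ρ δ γ : ℝ)
    (h : (1 : ℝ) + (δ ^ 2 + k₃ * (γ + (1 / 2) * Real.arctan (2 * k₂ * δ)) ^ 2) ≠ 0) :
    HasDerivAt (fun d => Vcomp k₁ k₂ k₃ ρ d γ)
      ((2 * δ + 2 * k₃ * (γ + (1 / 2) * Real.arctan (2 * k₂ * δ))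
          * (k₂ / (1 + (2 * k₂ * δ) ^ 2)))
        / (2 * Real.sqrt (1 + (δ ^ 2 + k₃ * (γ + (1 / 2) * Real.arctan (2 * k₂ * δ)) ^ 2)))) δ := by
  have hin : HasDerivAt (fun d : ℝ => Real.arctan (2 * k₂ * d))
      ((1 / (1 + (2 * k₂ * δ) ^ 2)) * (2 * k₂)) δ := by
    have hlin : HasDerivAt (fun d : ℝ => 2 * k₂ * d) (2 * k₂) δ := by
      simpa using (hasDerivAt_id δ).const_mul (2 * k₂)
    exact (Real.hasDerivAt_arctan (2 * k₂ * δ)).comp δ hlin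
  have h1 : HasDerivAt
      (fun d : ℝ => 1 + (d ^ 2 + k₃ * (γ + (1 / 2) * Real.arctan (2 * k₂ * d)) ^ 2))
      (2 * δ + 2 * k₃ * (γ + (1 / 2) * Real.arctan (2 * k₂ * δ))
          * (k₂ / (1 + (2 * k₂ * δ) ^ 2))) δ := by
    have hw : HasDerivAt (fun d : ℝ => γ + (1 / 2) * Real.arctan (2 * k₂ * d))
        ((1 / 2) * ((1 / (1 + (2 * k₂ * δ) ^ 2)) * (2 * k₂))) δ :=
      (hin.const_mul (1 / 2)).const_add γ
    have hsq := (hw.fun_pow 2).const_mul k₃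
    have := (((hasDerivAt_pow 2 δ).add hsq)).const_add 1
    refine this.congr_deriv ?_
    try simp only [id_eq]
    push_cast
    ring
  have h2 := h1.sqrt h
  have := (h2.const_add (Real.sqrt (1 + k₁ * ρ ^ 2))).sub_const 2
  simpa [Vcomp] using this

theorem composite_CLF_strict
    (k₁ k₂ k₃ : ℝ) (hk₁ : 0 < k₁) (hk₂ : 0 < k₂) (hk₃ : 0 < k₃) :
    (Vcomp k₁ k₂ k₃ 0 0 0 = 0
      ∧ ∀ ρ δ γ : ℝ, (ρ, δ, γ) ≠ ((0 : ℝ), (0 : ℝ), (0 : ℝ)) →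
          0 < Vcomp k₁ k₂ k₃ ρ δ γ)
    ∧ ∀ ρ δ γ : ℝ, 0 ≤ ρ →
        nu₁comp k₁ k₂ k₃ ρ δ γ = 0 → nu₂comp k₁ k₂ k₃ ρ δ γ = 0 →
        ρ = 0 ∧ δ = 0 ∧ γ = 0 := by
  constructor
  · constructor
    · norm_num [Vcomp]
    · intro ρ δ γ hne
      set w : ℝ := γ + (1 / 2) * Real.arctan (2 * k₂ * δ) with hw
      have hA1 : (1 : ℝ) ≤ 1 + k₁ * ρ ^ 2 := by nlinarith
      have hS1 : (1 : ℝ) ≤ 1 + (δ ^ 2 + k₃ * w ^ 2) := by nlinarith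
      have hA : (1 : ℝ) ≤ Real.sqrt (1 + k₁ * ρ ^ 2) := Real.one_le_sqrt.mpr hA1
      have hS : (1 : ℝ) ≤ Real.sqrt (1 + (δ ^ 2 + k₃ * w ^ 2)) := Real.one_le_sqrt.mpr hS1
      have hstrict : 1 < Real.sqrt (1 + k₁ * ρ ^ 2)
          ∨ 1 < Real.sqrt (1 + (δ ^ 2 + k₃ * w ^ 2)) := by
        rcases eq_or_ne ρ 0 with hρ | hρ
        · right
          have hδγ : δ ≠ 0 ∨ γ ≠ 0 := by
            by_contra hc
            push_neg at hc
            exact hne (by simp [hρ, hc.1, hc.2])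
          have h1 : 1 < 1 + (δ ^ 2 + k₃ * w ^ 2) := by
            rcases hδγ with hδ | hγ
            · nlinarith [sq_nonneg w, sq_pos_of_ne_zero hδ]
            · rcases eq_or_ne δ 0 with h0 | h0
              · have : w = γ := by simp [hw, h0]
                nlinarith [sq_nonneg δ, sq_pos_of_ne_zero (a := w) (by rw [this]; exact hγ)]
              · nlinarith [sq_nonneg w, sq_pos_of_ne_zero h0]
          exact (Real.lt_sqrt (by norm_num)).mpr (by simpa using h1)
        · left
          exact (Real.lt_sqrt (by norm_num)).mpr
            (by nlinarith [sq_pos_of_ne_zero hρ])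
      unfold Vcomp
      rw [← hw]
      rcases hstrict with h | h <;> linarith
  · intro ρ δ γ hρ hν₁ hν₂
    set w : ℝ := γ + (1 / 2) * Real.arctan (2 * k₂ * δ) with hw
    have hApos : (0 : ℝ) < 1 + k₁ * ρ ^ 2 := by positivity
    have hSpos : (0 : ℝ) < 1 + (δ ^ 2 + k₃ * w ^ 2) := by positivity
    have hsA : 0 < Real.sqrt (1 + k₁ * ρ ^ 2) := Real.sqrt_pos.mpr hApos
    have hsS : 0 < Real.sqrt (1 + (δ ^ 2 + k₃ * w ^ 2)) := Real.sqrt_pos.mpr hSpos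
    have hdρ := (hasDerivAt_rho_section k₁ k₂ k₃ δ γ ρ hApos.ne').deriv
    have hSne : (1 : ℝ) + (δ ^ 2 + k₃ * (γ + (1 / 2) * Real.arctan (2 * k₂ * δ)) ^ 2) ≠ 0 := by
      rw [← hw]; exact hSpos.ne'
    have hdγ := (hasDerivAt_gamma_section k₁ k₂ k₃ ρ δ γ hSne).deriv
    have hdδ := (hasDerivAt_delta_section k₁ k₂ k₃ ρ δ γ hSne).deriv
    rw [← hw] at hdγ hdδ
    -- from ν₂ = 0 deduce w = 0
    have hw0 : w = 0 := by
      rw [nu₂comp, hdγ, neg_eq_zero, div_eq_zero_iff] at hν₂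
      rcases hν₂ with h | h
      · rcases mul_eq_zero.mp h with h' | h'
        · exact absurd h' hk₃.ne'
        · linarith
      · exact absurd h (mul_pos two_pos hsS).ne'
    -- γ determined by δ
    have hγδ : γ = -((1 / 2) * Real.arctan (2 * k₂ * δ)) := by
      have := hw0
      rw [hw] at this
      linarith
    -- bounds on γ
    have hpi : (0 : ℝ) < π := Real.pi_pos
    have harb1 : Real.arctan (2 * k₂ * δ) < π / 2 := Real.arctan_lt_pi_div_two _
    have harb2 : -(π / 2) < Real.arctan (2 * k₂ * δ) := Real.neg_pi_div_two_lt_arctan _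
    have hγlt : γ < π / 2 := by rw [hγδ]; linarith
    have hγgt : -(π / 2) < γ := by rw [hγδ]; linarith
    have hcos : 0 < Real.cos γ := Real.cos_pos_of_mem_Ioo ⟨hγgt, hγlt⟩
    -- simplify ν₁
    rw [nu₁comp, hdρ, hdδ, hdγ, hw0] at hν₁
    have hν₁' : -(k₁ * (2 * ρ) / (2 * Real.sqrt (1 + k₁ * ρ ^ 2))) * ρ * Real.cos γ
        + (2 * δ / (2 * Real.sqrt (1 + (δ ^ 2 + k₃ * 0 ^ 2)))) * Real.sin γ = 0 := by
      linear_combination hν₁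
    have hS0 : Real.sqrt (1 + (δ ^ 2 + k₃ * 0 ^ 2)) = Real.sqrt (1 + δ ^ 2) := by norm_num
    rw [hS0] at hν₁'
    have hsS' : 0 < Real.sqrt (1 + δ ^ 2) := Real.sqrt_pos.mpr (by positivity)
    -- cross-multiplied key identity
    have hkey : k₁ * ρ ^ 2 * Real.cos γ * Real.sqrt (1 + δ ^ 2)
        = δ * Real.sin γ * Real.sqrt (1 + k₁ * ρ ^ 2) := by
      field_simp [hsA.ne', hsS'.ne'] at hν₁'
      linarith [hν₁']
    have hT2 : δ * Real.sin γ ≤ 0 ∧ (δ ≠ 0 → δ * Real.sin γ < 0) := by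
      constructor
      · rcases lt_trichotomy δ 0 with h | h | h
        · have ha : Real.arctan (2 * k₂ * δ) < 0 := by
            have := Real.arctan_strictMono (mul_neg_of_pos_of_neg (by positivity : (0:ℝ) < 2 * k₂) h)
            simpa [Real.arctan_zero, mul_assoc] using this
          have hγpos : 0 < γ := by rw [hγδ]; linarith
          have hsin : 0 < Real.sin γ := Real.sin_pos_of_pos_of_lt_pi hγpos (by linarith)
          exact le_of_lt (mul_neg_of_neg_of_pos h hsin)
        · simp [h]
        · have ha : 0 < Real.arctan (2 * k₂ * δ) := by
            have := Real.arctan_strictMono (mul_pos (by positivity : (0:ℝ) < 2 * k₂) h)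
            simpa [Real.arctan_zero, mul_assoc] using this
          have hγneg : γ < 0 := by rw [hγδ]; linarith
          have hsin : Real.sin γ < 0 := Real.sin_neg_of_neg_of_neg_pi_lt hγneg (by linarith)
          exact le_of_lt (mul_neg_of_pos_of_neg h hsin)
      · intro hδ
        rcases lt_or_gt_of_ne hδ with h | h
        · have ha : Real.arctan (2 * k₂ * δ) < 0 := by
            have := Real.arctan_strictMono (mul_neg_of_pos_of_neg (by positivity : (0:ℝ) < 2 * k₂) h)
            simpa [Real.arctan_zero, mul_assoc] using this
          have hγpos : 0 < γ := by rw [hγδ]; linarith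
          have hsin : 0 < Real.sin γ := Real.sin_pos_of_pos_of_lt_pi hγpos (by linarith)
          exact mul_neg_of_neg_of_pos h hsin
        · have ha : 0 < Real.arctan (2 * k₂ * δ) := by
            have := Real.arctan_strictMono (mul_pos (by positivity : (0:ℝ) < 2 * k₂) h)
            simpa [Real.arctan_zero, mul_assoc] using this
          have hγneg : γ < 0 := by rw [hγδ]; linarith
          have hsin : Real.sin γ < 0 := Real.sin_neg_of_neg_of_neg_pi_lt hγneg (by linarith)
          exact mul_neg_of_pos_of_neg h hsin
    have hT1 : 0 ≤ k₁ * ρ ^ 2 * Real.cos γ * Real.sqrt (1 + δ ^ 2) := by positivity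
    have hδ0 : δ = 0 := by
      by_contra hδ
      have h2 := hT2.2 hδ
      have : δ * Real.sin γ * Real.sqrt (1 + k₁ * ρ ^ 2) < 0 := mul_neg_of_neg_of_pos h2 hsA
      linarith [hkey ▸ hT1]
    have hγ0 : γ = 0 := by
      rw [hγδ, hδ0]
      simp [Real.arctan_zero]
    have hρ0 : ρ = 0 := by
      have hrhs : δ * Real.sin γ * Real.sqrt (1 + k₁ * ρ ^ 2) = 0 := by simp [hδ0]
      rw [hrhs] at hkey
      by_contra h
      have hρ2 : 0 < ρ ^ 2 := lt_of_le_of_ne (sq_nonneg ρ) (Ne.symm (pow_ne_zero 2 h))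
      have : 0 < k₁ * ρ ^ 2 * Real.cos γ * Real.sqrt (1 + δ ^ 2) := by positivity
      linarith
    exact ⟨hρ0, hδ0, hγ0⟩


end
end

section
/- Consider the uncertain unicycle with unknown constants b₁, b₂ > 0 under the adaptive feedback and update laws, where V : {ρ>0}×ℝ² → [0,∞) is any nonnegative C¹ function. Along every closed-loop solution (ρ,δ,γ,ε̂₁,ε̂₂) on an interval I with ρ(t) > 0, the adaptive Lyapunov function V_a(t) = ln(1 + n(V(t))) + (b₁/(2μ₁)) ε̃₁(t)² + (b₂/(2μ₂)) ε̃₂(t)², where V(t) = V(ρ(t),δ(t),γ(t)) and ε̃ᵢ(t) = 1/bᵢ − ε̂ᵢ(t), is differentiable and satisfies dV_a/dt(t) = −(n′(V(t))/(1 + n(V(t)))) (ν₁(t)² + ν₂(t)²) ≤ 0 for all t ∈ I, where ν₁, ν₂ are evaluated along the trajectory. -/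
/-!
STATEMENT 11: Uncertain unicycle (unknown input coefficients b₁, b₂ > 0) under
the adaptive feedback v = −ε̂₁ ρ ν₁, ω = −ε̂₂ ν₂ with normalized gradient update
laws: along every closed-loop solution with ρ > 0, the adaptive Lyapunov
function V_a = ln(1+n(V)) + (b₁/2μ₁)ε̃₁² + (b₂/2μ₂)ε̃₂² is differentiable with
dV_a/dt = −(n′(V)/(1+n(V)))(ν₁² + ν₂²) ≤ 0.
-/
noncomputable section

open Real Set Filter

lemma gradMap_apply_s11 (aρ aδ aγ : ℝ) (q : ℝ × ℝ × ℝ) :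
    gradMap aρ aδ aγ q = aρ * q.1 + aδ * q.2.1 + aγ * q.2.2 := by
  simp [gradMap]

lemma deriv_nonneg_of_strictMonoOn {n n' : ℝ → ℝ}
    (hn : ∀ s : ℝ, 0 ≤ s → HasDerivAt n (n' s) s)
    (hnmono : StrictMonoOn n (Set.Ici 0)) {s : ℝ} (hs : 0 ≤ s) : 0 ≤ n' s := by
  have h : HasDerivWithinAt n (n' s) (Set.Ioi s) s :=
    (hn s hs).hasDerivWithinAt
  have htend := hasDerivWithinAt_iff_tendsto_slope.1 h
  have hsub : Set.Ioi s \ {s} = Set.Ioi s := by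
    ext x; simp (config := {contextual := true}) [lt_irrefl, ne_of_gt, LT.lt.ne']
  rw [hsub] at htend
  refine ge_of_tendsto htend ?_
  filter_upwards [self_mem_nhdsWithin] with x hx
  have hxs : s < x := hx
  have : n s < n x := hnmono hs (le_trans hs hxs.le) hxs
  have hxpos : 0 < x - s := sub_pos.2 hxs
  rw [slope_def_field]
  exact le_of_lt (div_pos (sub_pos.2 this) hxpos)

theorem adaptive_Lyapunov_derivative
    (b₁ b₂ μ₁ μ₂ : ℝ) (hb₁ : 0 < b₁) (hb₂ : 0 < b₂) (hμ₁ : 0 < μ₁) (hμ₂ : 0 < μ₂)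
    (V Vρ Vδ Vγ : ℝ × ℝ × ℝ → ℝ) (n n' : ℝ → ℝ)
    -- V is a nonnegative C¹ function on {ρ > 0} × ℝ² with partials Vρ, Vδ, Vγ
    (hV : ∀ p : ℝ × ℝ × ℝ, 0 < p.1 → HasFDerivAt V (gradMap (Vρ p) (Vδ p) (Vγ p)) p)
    (hVnonneg : ∀ p : ℝ × ℝ × ℝ, 0 < p.1 → 0 ≤ V p)
    -- n is a C¹, strictly increasing normalization function with n(0) = 0
    (hn : ∀ s : ℝ, 0 ≤ s → HasDerivAt n (n' s) s)
    (hn0 : n 0 = 0) (hnmono : StrictMonoOn n (Set.Ici 0))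
    (hnnonneg : ∀ s : ℝ, 0 ≤ s → 0 ≤ n s)
    -- the closed-loop solution with feedback v = −ε̂₁ ρ ν₁, ω = −ε̂₂ ν₂
    (I : Set ℝ) (ρ δ γ e₁ e₂ : ℝ → ℝ)
    (hρpos : ∀ t ∈ I, 0 < ρ t)
    (hρ : ∀ t ∈ I, HasDerivAt ρ
      (-(b₁ * (-(e₁ t) * ρ t * nuOne Vρ Vδ Vγ (ρ t, δ t, γ t)))
        * Real.cos (γ t)) t)
    (hδ : ∀ t ∈ I, HasDerivAt δ
      (b₁ * ((-(e₁ t) * ρ t * nuOne Vρ Vδ Vγ (ρ t, δ t, γ t)) / ρ t)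
        * Real.sin (γ t)) t)
    (hγ : ∀ t ∈ I, HasDerivAt γ
      (b₁ * ((-(e₁ t) * ρ t * nuOne Vρ Vδ Vγ (ρ t, δ t, γ t)) / ρ t)
          * Real.sin (γ t)
        - b₂ * (-(e₂ t) * nuTwo Vγ (ρ t, δ t, γ t))) t)
    -- the update laws
    (he₁ : ∀ t ∈ I, HasDerivAt e₁
      (μ₁ * (n' (V (ρ t, δ t, γ t)) / (1 + n (V (ρ t, δ t, γ t))))
        * nuOne Vρ Vδ Vγ (ρ t, δ t, γ t) ^ 2) t)
    (he₂ : ∀ t ∈ I, HasDerivAt e₂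
      (μ₂ * (n' (V (ρ t, δ t, γ t)) / (1 + n (V (ρ t, δ t, γ t))))
        * nuTwo Vγ (ρ t, δ t, γ t) ^ 2) t) :
    ∀ t ∈ I,
      HasDerivAt
        (fun s => Real.log (1 + n (V (ρ s, δ s, γ s)))
          + b₁ / (2 * μ₁) * (1 / b₁ - e₁ s) ^ 2
          + b₂ / (2 * μ₂) * (1 / b₂ - e₂ s) ^ 2)
        (-(n' (V (ρ t, δ t, γ t)) / (1 + n (V (ρ t, δ t, γ t))))
          * (nuOne Vρ Vδ Vγ (ρ t, δ t, γ t) ^ 2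
            + nuTwo Vγ (ρ t, δ t, γ t) ^ 2)) t
      ∧ (-(n' (V (ρ t, δ t, γ t)) / (1 + n (V (ρ t, δ t, γ t))))
          * (nuOne Vρ Vδ Vγ (ρ t, δ t, γ t) ^ 2
            + nuTwo Vγ (ρ t, δ t, γ t) ^ 2)) ≤ 0 := by

  intro t ht
  set p : ℝ × ℝ × ℝ := (ρ t, δ t, γ t) with hp
  have hppos : 0 < p.1 := hρpos t ht
  have hV0 : 0 ≤ V p := hVnonneg p hppos
  have hn0' : 0 ≤ n (V p) := hnnonneg _ hV0
  have hpos : 0 < 1 + n (V p) := by linarith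
  have hne : (1 : ℝ) + n (V p) ≠ 0 := ne_of_gt hpos
  set ν₁ := nuOne Vρ Vδ Vγ p with hnu1
  set ν₂ := nuTwo Vγ p with hnu2
  set c := n' (V p) / (1 + n (V p)) with hc
  -- derivative of the curve
  have hF : HasDerivAt (fun s => (ρ s, δ s, γ s))
      ((-(b₁ * (-(e₁ t) * ρ t * ν₁)) * Real.cos (γ t),
        (b₁ * ((-(e₁ t) * ρ t * ν₁) / ρ t) * Real.sin (γ t),
         b₁ * ((-(e₁ t) * ρ t * ν₁) / ρ t) * Real.sin (γ t)
           - b₂ * (-(e₂ t) * ν₂)))) t :=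
    (hρ t ht).prodMk ((hδ t ht).prodMk (hγ t ht))
  have hVF : HasDerivAt (fun s => V (ρ s, δ s, γ s))
      (Vρ p * (-(b₁ * (-(e₁ t) * ρ t * ν₁)) * Real.cos (γ t))
        + Vδ p * (b₁ * ((-(e₁ t) * ρ t * ν₁) / ρ t) * Real.sin (γ t))
        + Vγ p * (b₁ * ((-(e₁ t) * ρ t * ν₁) / ρ t) * Real.sin (γ t)
            - b₂ * (-(e₂ t) * ν₂))) t := by
    have := (hV p hppos).comp_hasDerivAt t hF
    rwa [gradMap_apply_s11] at this
  set dV := Vρ p * (-(b₁ * (-(e₁ t) * ρ t * ν₁)) * Real.cos (γ t))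
        + Vδ p * (b₁ * ((-(e₁ t) * ρ t * ν₁) / ρ t) * Real.sin (γ t))
        + Vγ p * (b₁ * ((-(e₁ t) * ρ t * ν₁) / ρ t) * Real.sin (γ t)
            - b₂ * (-(e₂ t) * ν₂)) with hdV
  have hnVF : HasDerivAt (fun s => n (V (ρ s, δ s, γ s))) (n' (V p) * dV) t :=
    (hn (V p) hV0).comp t hVF
  have hlog : HasDerivAt (fun s => Real.log (1 + n (V (ρ s, δ s, γ s))))
      ((n' (V p) * dV) / (1 + n (V p))) t :=
    HasDerivAt.log (hnVF.const_add 1) hne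
  have h1 : HasDerivAt (fun s => b₁ / (2 * μ₁) * (1 / b₁ - e₁ s) ^ 2)
      (b₁ / (2 * μ₁) * (2 * (1 / b₁ - e₁ t) ^ 1 * (μ₁ * c * ν₁ ^ 2) * (-1))) t := by
    have := (((he₁ t ht).neg.const_add (1 / b₁)).pow 2).const_mul (b₁ / (2 * μ₁))
    simpa [sub_eq_add_neg, mul_comm, mul_assoc, mul_left_comm] using this
  have h2 : HasDerivAt (fun s => b₂ / (2 * μ₂) * (1 / b₂ - e₂ s) ^ 2)
      (b₂ / (2 * μ₂) * (2 * (1 / b₂ - e₂ t) ^ 1 * (μ₂ * c * ν₂ ^ 2) * (-1))) t := by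
    have := (((he₂ t ht).neg.const_add (1 / b₂)).pow 2).const_mul (b₂ / (2 * μ₂))
    simpa [sub_eq_add_neg, mul_comm, mul_assoc, mul_left_comm] using this
  have hsum := (hlog.add h1).add h2
  constructor
  · refine hsum.congr_deriv ?_
    have hρne : ρ t ≠ 0 := ne_of_gt hppos
    have hμ₁ne : μ₁ ≠ 0 := ne_of_gt hμ₁
    have hμ₂ne : μ₂ ≠ 0 := ne_of_gt hμ₂
    have hb₁ne : b₁ ≠ 0 := ne_of_gt hb₁
    have hb₂ne : b₂ ≠ 0 := ne_of_gt hb₂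
    have hν₁' : ν₁ = -(Vρ p) * ρ t * Real.cos (γ t) + (Vδ p + Vγ p) * Real.sin (γ t) := rfl
    have hν₂' : ν₂ = -(Vγ p) := rfl
    have hdVeq : dV = -(b₁ * e₁ t * ν₁ ^ 2) - b₂ * e₂ t * ν₂ ^ 2 := by
      rw [hdV, hν₁', hν₂']
      field_simp
      ring
    rw [hdVeq, hc]
    field_simp
    ring
  · have hc0 : 0 ≤ c :=
      div_nonneg (deriv_nonneg_of_strictMonoOn hn hnmono hV0) (le_of_lt hpos)
    have : 0 ≤ ν₁ ^ 2 + ν₂ ^ 2 := by positivity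
    have := mul_nonneg hc0 this
    simpa [hc] using by nlinarith


end
end

section
/- Let p ∈ (0,1/2), T > 0 and t₀ ∈ ℝ, and let W : [t₀,∞) → [0,∞) be differentiable and satisfy W′(t) ≤ −(1/(pT)) exp(W(t)^p) W(t)^{1−p} for every t ≥ t₀ with W(t) > 0. Set T_s = T (1 − exp(−W(t₀)^p)). Then: (i) T_s ≤ T; (ii) W(t) ≤ [ln(1/((t−t₀)/T + exp(−W(t₀)^p)))]^{1/p} for all t ∈ [t₀, t₀ + T_s); and (iii) W(t) = 0 for all t ≥ t₀ + T_s. (This is the fixed-time comparison estimate at the core of the FxT-parking theorem: the closed loop with the homogeneity-scaled feedback has Lyapunov function satisfying the above differential inequality, hence converges to zero no later than the user-chosen time T.) -/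
/-!
STATEMENT 15: Fixed-time comparison estimate: if W ≥ 0 is differentiable on
[t₀,∞) and W′(t) ≤ −(1/(pT)) exp(W^p) W^{1−p} whenever W(t) > 0, with
p ∈ (0,1/2), T > 0, then with T_s = T(1 − exp(−W(t₀)^p)):
(i) T_s ≤ T;
(ii) W(t) ≤ [ln(1/((t−t₀)/T + exp(−W(t₀)^p)))]^{1/p} on [t₀, t₀+T_s);
(iii) W(t) = 0 for all t ≥ t₀ + T_s.
-/

open Real Set

/-- Once W hits zero it stays zero. -/
lemma aux_zero_forward
    (p T t₀ : ℝ) (hp₀ : 0 < p) (hT : 0 < T)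
    (W W' : ℝ → ℝ)
    (hWnonneg : ∀ t : ℝ, t₀ ≤ t → 0 ≤ W t)
    (hWderiv : ∀ t : ℝ, t₀ ≤ t → HasDerivAt W (W' t) t)
    (hWineq : ∀ t : ℝ, t₀ ≤ t → 0 < W t →
      W' t ≤ -(1 / (p * T)) * Real.exp (W t ^ p) * W t ^ (1 - p))
    (s t : ℝ) (hs : t₀ ≤ s) (hst : s ≤ t) (hWs : W s = 0) : W t = 0 := by
  by_contra h
  have hWt : 0 < W t := lt_of_le_of_ne (hWnonneg t (hs.trans hst)) (Ne.symm h)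
  set S : Set ℝ := {u ∈ Icc s t | W u = 0} with hS
  have hne : S.Nonempty := ⟨s, ⟨le_refl s, hst⟩, hWs⟩
  have hbdd : BddAbove S := ⟨t, fun u hu => hu.1.2⟩
  have hcont : ContinuousOn W (Icc s t) := fun u hu =>
    ((hWderiv u (hs.trans hu.1)).continuousAt).continuousWithinAt
  have hclosed : IsClosed S := by
    have := hcont.preimage_isClosed_of_isClosed isClosed_Icc (isClosed_singleton (x := (0:ℝ)))
    exact this
  have hσmem : sSup S ∈ S := hclosed.csSup_mem hne hbdd
  set σ := sSup S with hσ
  have hσt : σ ≤ t := hσmem.1.2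
  have hσs : s ≤ σ := hσmem.1.1
  have hWσ : W σ = 0 := hσmem.2
  have hpos : ∀ u, σ < u → u ≤ t → 0 < W u := by
    intro u h1 h2
    rcases lt_or_eq_of_le (hWnonneg u (hs.trans (hσs.trans h1.le))) with h' | h'
    · exact h'
    · exfalso
      have : u ∈ S := ⟨⟨hσs.trans h1.le, h2⟩, h'.symm⟩
      exact absurd (le_csSup hbdd this) (not_le.mpr h1)
  have hanti : AntitoneOn W (Icc σ t) := by
    apply antitoneOn_of_deriv_nonpos (convex_Icc σ t)
    · exact fun u hu => ((hWderiv u (hs.trans (hσs.trans hu.1))).continuousAt).continuousWithinAt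
    · intro u hu
      rw [interior_Icc] at hu
      exact ((hWderiv u (hs.trans (hσs.trans hu.1.le))).differentiableAt).differentiableWithinAt
    · intro u hu
      rw [interior_Icc] at hu
      have ht₀u : t₀ ≤ u := hs.trans (hσs.trans hu.1.le)
      rw [(hWderiv u ht₀u).deriv]
      have hWu : 0 < W u := hpos u hu.1 hu.2.le
      have h1 := hWineq u ht₀u hWu
      have h2 : 0 ≤ (1 / (p * T)) * Real.exp (W u ^ p) * W u ^ (1 - p) := by
        positivity
      linarith
  have := hanti ⟨le_refl σ, hσt⟩ ⟨hσt, le_refl t⟩ hσt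
  rw [hWσ] at this
  exact absurd this (not_le.mpr hWt)

/-- Comparison: if W > 0 on [t₀,t] then exp(-W^p) grows at rate ≥ 1/T. -/
lemma aux_comp
    (p T t₀ : ℝ) (hp₀ : 0 < p) (hT : 0 < T)
    (W W' : ℝ → ℝ)
    (hWderiv : ∀ t : ℝ, t₀ ≤ t → HasDerivAt W (W' t) t)
    (hWineq : ∀ t : ℝ, t₀ ≤ t → 0 < W t →
      W' t ≤ -(1 / (p * T)) * Real.exp (W t ^ p) * W t ^ (1 - p))
    (t : ℝ) (ht : t₀ ≤ t) (hWpos : ∀ u ∈ Icc t₀ t, 0 < W u) :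
    (t - t₀) / T + Real.exp (-(W t₀ ^ p)) ≤ Real.exp (-(W t ^ p)) := by
  set g : ℝ → ℝ := fun u => Real.exp (-(W u ^ p)) - u / T with hg
  have hd : ∀ u, t₀ ≤ u → 0 < W u →
      HasDerivAt g (Real.exp (-(W u ^ p)) * -(W' u * p * W u ^ (p - 1)) - 1 / T) u := by
    intro u hu hWu
    have hd1 : HasDerivAt (fun v => W v ^ p) (W' u * p * W u ^ (p - 1)) u :=
      (hWderiv u hu).rpow_const (Or.inl (ne_of_gt hWu))
    have hd3 := hd1.neg.exp
    exact hd3.sub ((hasDerivAt_id u).div_const T)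
  have hmono : MonotoneOn g (Icc t₀ t) := by
    apply monotoneOn_of_deriv_nonneg (convex_Icc t₀ t)
    · exact fun u hu => (hd u hu.1 (hWpos u hu)).continuousAt.continuousWithinAt
    · intro u hu
      rw [interior_Icc] at hu
      exact (hd u hu.1.le (hWpos u ⟨hu.1.le, hu.2.le⟩)).differentiableAt.differentiableWithinAt
    · intro u hu
      rw [interior_Icc] at hu
      have ht₀u : t₀ ≤ u := hu.1.le
      have hWu : 0 < W u := hWpos u ⟨hu.1.le, hu.2.le⟩
      rw [(hd u ht₀u hWu).deriv]
      have h1 := hWineq u ht₀u hWu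
      have hbc : W u ^ (1 - p) * W u ^ (p - 1) = 1 := by
        rw [← Real.rpow_add hWu]; norm_num
      have hea : Real.exp (-(W u ^ p)) * Real.exp (W u ^ p) = 1 := by
        rw [← Real.exp_add]; norm_num
      have hc : (0:ℝ) < W u ^ (p - 1) := Real.rpow_pos_of_pos hWu _
      have hexp : (0:ℝ) < Real.exp (-(W u ^ p)) := Real.exp_pos _
      have hpT : (0:ℝ) < p * T := mul_pos hp₀ hT
      have h2 : -(W' u) * (p * W u ^ (p - 1)) ≥
          ((1 / (p * T)) * Real.exp (W u ^ p) * W u ^ (1 - p)) * (p * W u ^ (p - 1)) := by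
        apply mul_le_mul_of_nonneg_right _ (by positivity)
        linarith
      have h3 : ((1 / (p * T)) * Real.exp (W u ^ p) * W u ^ (1 - p)) * (p * W u ^ (p - 1))
          = Real.exp (W u ^ p) / T := by
        field_simp
        linear_combination hbc
      rw [h3] at h2
      have h4 : Real.exp (-(W u ^ p)) * -(W' u * p * W u ^ (p - 1))
          ≥ Real.exp (-(W u ^ p)) * (Real.exp (W u ^ p) / T) := by
        apply mul_le_mul_of_nonneg_left _ hexp.le
        nlinarith
      have h5 : Real.exp (-(W u ^ p)) * (Real.exp (W u ^ p) / T) = 1 / T := by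
        field_simp
        linear_combination hea
      rw [h5] at h4
      linarith
  have := hmono ⟨le_refl t₀, ht⟩ ⟨ht, le_refl t⟩ ht
  simp only [hg] at this
  rw [sub_div]
  linarith


theorem fixed_time_comparison
    (p T t₀ : ℝ) (hp₀ : 0 < p) (hp₁ : p < 1 / 2) (hT : 0 < T)
    (W W' : ℝ → ℝ)
    (hWnonneg : ∀ t : ℝ, t₀ ≤ t → 0 ≤ W t)
    (hWderiv : ∀ t : ℝ, t₀ ≤ t → HasDerivAt W (W' t) t)
    (hWineq : ∀ t : ℝ, t₀ ≤ t → 0 < W t →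
      W' t ≤ -(1 / (p * T)) * Real.exp (W t ^ p) * W t ^ (1 - p)) :
    T * (1 - Real.exp (-(W t₀ ^ p))) ≤ T
    ∧ (∀ t : ℝ, t₀ ≤ t → t < t₀ + T * (1 - Real.exp (-(W t₀ ^ p))) →
        W t ≤ (Real.log (1 / ((t - t₀) / T + Real.exp (-(W t₀ ^ p))))) ^ (1 / p))
    ∧ (∀ t : ℝ, t₀ + T * (1 - Real.exp (-(W t₀ ^ p))) ≤ t → W t = 0) := by
  have hE0 : 0 < Real.exp (-(W t₀ ^ p)) := Real.exp_pos _
  have hE1 : Real.exp (-(W t₀ ^ p)) ≤ 1 := by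
    apply Real.exp_le_one_iff.mpr
    simp [Real.rpow_nonneg (hWnonneg t₀ le_rfl) p]
  refine ⟨by nlinarith, ?_, ?_⟩
  · -- (ii)
    intro t ht htlt
    set x : ℝ := (t - t₀) / T + Real.exp (-(W t₀ ^ p)) with hx
    have hx0 : 0 < x := by
      rw [hx]
      have : 0 ≤ (t - t₀) / T := div_nonneg (by linarith) hT.le
      linarith
    have hx1 : x < 1 := by
      have : (t - t₀) / T < 1 - Real.exp (-(W t₀ ^ p)) := by
        rw [div_lt_iff₀ hT]; nlinarith
      rw [hx]; linarith
    have hlog : 0 ≤ Real.log (1 / x) := by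
      apply Real.log_nonneg
      rw [le_div_iff₀ hx0]; linarith
    rcases eq_or_lt_of_le (hWnonneg t ht) with h | h
    · rw [← h]; exact Real.rpow_nonneg hlog _
    · have hpos : ∀ u ∈ Set.Icc t₀ t, 0 < W u := by
        intro u hu
        rcases eq_or_lt_of_le (hWnonneg u hu.1) with h' | h'
        · exact absurd (aux_zero_forward p T t₀ hp₀ hT W W' hWnonneg hWderiv hWineq
            u t hu.1 hu.2 h'.symm) (by linarith)
        · exact h'
      have hcomp := aux_comp p T t₀ hp₀ hT W W' hWderiv hWineq t ht hpos
      have hlogle : Real.log x ≤ -(W t ^ p) := by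
        calc Real.log x ≤ Real.log (Real.exp (-(W t ^ p))) :=
              Real.log_le_log hx0 hcomp
          _ = -(W t ^ p) := Real.log_exp _
      have hWp : W t ^ p ≤ Real.log (1 / x) := by
        rw [one_div, Real.log_inv]; linarith
      have key : (W t ^ p) ^ (1 / p) ≤ (Real.log (1 / x)) ^ (1 / p) :=
        Real.rpow_le_rpow (Real.rpow_nonneg (hWnonneg t ht) p) hWp (by positivity)
      have hid : (W t ^ p) ^ (1 / p) = W t := by
        rw [← Real.rpow_mul (hWnonneg t ht)]
        rw [mul_one_div, div_self (ne_of_gt hp₀), Real.rpow_one]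
      rwa [hid] at key
  · -- (iii)
    intro t ht
    have ht₀t : t₀ ≤ t := by nlinarith
    by_contra h
    have hWt : 0 < W t := lt_of_le_of_ne (hWnonneg t ht₀t) (Ne.symm h)
    have hpos : ∀ u ∈ Set.Icc t₀ t, 0 < W u := by
      intro u hu
      rcases eq_or_lt_of_le (hWnonneg u hu.1) with h' | h'
      · exact absurd (aux_zero_forward p T t₀ hp₀ hT W W' hWnonneg hWderiv hWineq
          u t hu.1 hu.2 h'.symm) (by linarith)
      · exact h'
    have hcomp := aux_comp p T t₀ hp₀ hT W W' hWderiv hWineq t ht₀t hpos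
    have h1 : 1 - Real.exp (-(W t₀ ^ p)) ≤ (t - t₀) / T := by
      rw [le_div_iff₀ hT]; nlinarith
    have h2 : (1:ℝ) ≤ Real.exp (-(W t ^ p)) := by linarith
    have h3 : Real.exp (-(W t ^ p)) < 1 := by
      rw [← Real.exp_zero]
      apply Real.exp_lt_exp.mpr
      have := Real.rpow_pos_of_pos hWt p
      linarith
    linarith
end

section
/- Let k₁, k₂, k₃ > 0 and define V(ρ,δ,γ) = ρ² + δ² + (k₁/k₃)(γ + (1/2) arctan(2k₂δ))² on ℝ³. Then for all (ρ,δ,γ) ∈ ℝ³: min{1/2, k₁/(2k₁k₂² + k₃)} · (ρ² + δ² + γ²) ≤ V(ρ,δ,γ) ≤ max{1, 1 + 2k₁k₂²/k₃, 2k₁/k₃} · (ρ² + δ² + γ²). (This is the quadratic sandwich bound on the bidirectional backstepping Lyapunov function used to convert Lyapunov-function decay estimates into bounds on the Euclidean norm of the state.) -/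
/-!
STATEMENT 16: Quadratic sandwich bound on the bidirectional backstepping
Lyapunov function V = ρ² + δ² + (k₁/k₃)(γ + (1/2)arctan(2k₂δ))²:
min{1/2, k₁/(2k₁k₂² + k₃)}·(ρ²+δ²+γ²) ≤ V ≤ max{1, 1+2k₁k₂²/k₃, 2k₁/k₃}·(ρ²+δ²+γ²).
-/

open Real

set_option maxHeartbeats 800000

lemma arctan_sq_le_sq (x : ℝ) : Real.arctan x ^ 2 ≤ x ^ 2 := by
  have key : ∀ y : ℝ, 0 ≤ y → Real.arctan y ≤ y := by
    intro y hy
    have h0 : 0 ≤ Real.arctan y := by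
      have := Real.arctan_strictMono.monotone hy
      simpa [Real.arctan_zero] using this
    have := Real.le_tan h0 (Real.arctan_lt_pi_div_two y)
    rwa [Real.tan_arctan] at this
  rcases le_total 0 x with hx | hx
  · have h1 := key x hx
    have h0 : 0 ≤ Real.arctan x := by
      have := Real.arctan_strictMono.monotone hx
      simpa [Real.arctan_zero] using this
    nlinarith
  · have h1 := key (-x) (by linarith)
    rw [Real.arctan_neg] at h1
    have h0 : 0 ≤ -Real.arctan x := by
      have := Real.arctan_strictMono.monotone (neg_nonneg.mpr hx)
      simpa [Real.arctan_zero] using this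
    nlinarith

theorem bidirectional_Lyapunov_quadratic_sandwich
    (k₁ k₂ k₃ : ℝ) (hk₁ : 0 < k₁) (hk₂ : 0 < k₂) (hk₃ : 0 < k₃) :
    ∀ ρ δ γ : ℝ,
      min (1 / 2) (k₁ / (2 * k₁ * k₂ ^ 2 + k₃)) * (ρ ^ 2 + δ ^ 2 + γ ^ 2)
        ≤ ρ ^ 2 + δ ^ 2
            + (k₁ / k₃) * (γ + (1 / 2) * Real.arctan (2 * k₂ * δ)) ^ 2
      ∧ ρ ^ 2 + δ ^ 2
            + (k₁ / k₃) * (γ + (1 / 2) * Real.arctan (2 * k₂ * δ)) ^ 2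
        ≤ max 1 (max (1 + 2 * k₁ * k₂ ^ 2 / k₃) (2 * k₁ / k₃))
            * (ρ ^ 2 + δ ^ 2 + γ ^ 2) := by
  intro ρ δ γ
  set a : ℝ := (1 / 2) * Real.arctan (2 * k₂ * δ) with ha_def
  have ha : a ^ 2 ≤ k₂ ^ 2 * δ ^ 2 := by
    have h := arctan_sq_le_sq (2 * k₂ * δ)
    rw [ha_def]
    nlinarith
  have hden : 0 < 2 * k₁ * k₂ ^ 2 + k₃ := by positivity
  have hR : ρ ^ 2 + δ ^ 2 + (k₁ / k₃) * (γ + a) ^ 2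
      = (k₃ * (ρ ^ 2 + δ ^ 2) + k₁ * (γ + a) ^ 2) / k₃ := by
    field_simp
  constructor
  · -- lower bound
    rcases min_cases (1 / 2) (k₁ / (2 * k₁ * k₂ ^ 2 + k₃)) with ⟨hm, hcond⟩ | ⟨hm, hcond⟩
    · -- min = 1/2, with 1/2 ≤ k₁/D, i.e. 2k₁k₂² + k₃ ≤ 2k₁
      rw [hm, hR, div_mul_eq_mul_div, div_le_div_iff₀ (by norm_num : (0:ℝ) < 2) hk₃]
      rw [le_div_iff₀ hden] at hcond
      have hB : 0 ≤ 2 * k₁ - 2 * k₁ * k₂ ^ 2 - k₃ := by linarith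
      have hs : k₂ ^ 2 < 1 := by nlinarith
      have hpoly : 0 ≤ k₂ ^ 2 * (1 - k₂ ^ 2) *
          ((k₃ * (ρ ^ 2 + δ ^ 2) + k₁ * (γ + a) ^ 2) * 2 - 1 * (ρ ^ 2 + δ ^ 2 + γ ^ 2) * k₃) := by
        nlinarith [mul_nonneg (mul_nonneg hk₃.le (sub_nonneg.mpr hs.le))
            (sub_nonneg.mpr ha),
          mul_nonneg (mul_nonneg (sq_nonneg k₂) hB) (sq_nonneg (γ + a)),
          mul_nonneg hk₃.le
            (sq_nonneg (k₂ ^ 2 * (γ + a) + (1 - k₂ ^ 2) * a)),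
          mul_nonneg (mul_nonneg (mul_nonneg (sq_nonneg k₂) (sub_nonneg.mpr hs.le)) hk₃.le)
            (sq_nonneg ρ)]
      have hC : 0 < k₂ ^ 2 * (1 - k₂ ^ 2) := by
        have : 0 < 1 - k₂ ^ 2 := by linarith
        positivity
      exact le_of_mul_le_mul_left (by nlinarith [hpoly]) hC
    · -- min = k₁/D, with k₁/D ≤ 1/2, i.e. 2k₁ ≤ 2k₁k₂² + k₃
      rw [hm, hR, div_mul_eq_mul_div, div_le_div_iff₀ hden hk₃]
      have hcond' : 2 * k₁ ≤ 2 * k₁ * k₂ ^ 2 + k₃ := by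
        rw [div_lt_iff₀ hden] at hcond; linarith
      have hB : 0 ≤ 2 * k₁ * k₂ ^ 2 + k₃ - 2 * k₁ := by linarith
      have hpoly : 0 ≤ 2 * k₂ ^ 2 *
          ((k₃ * (ρ ^ 2 + δ ^ 2) + k₁ * (γ + a) ^ 2) * (2 * k₁ * k₂ ^ 2 + k₃)
            - k₁ * (ρ ^ 2 + δ ^ 2 + γ ^ 2) * k₃) := by
        nlinarith [mul_nonneg (mul_nonneg (mul_nonneg (sq_nonneg k₂) hk₃.le) hB) (sq_nonneg δ),
          mul_nonneg (by positivity : (0:ℝ) ≤ 2 * k₂ ^ 2 * k₃ * k₁ + k₃ ^ 2)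
            (sub_nonneg.mpr ha),
          sq_nonneg (2 * k₁ * k₂ ^ 2 * (γ + a) + k₃ * a),
          mul_nonneg (mul_nonneg (by positivity : (0:ℝ) ≤ 2 * k₂ ^ 2 * k₃)
            (by nlinarith : (0:ℝ) ≤ 2 * k₁ * k₂ ^ 2 + k₃ - k₁)) (sq_nonneg ρ)]
      have hC : (0:ℝ) < 2 * k₂ ^ 2 := by positivity
      exact le_of_mul_le_mul_left (by nlinarith [hpoly]) hC
  · -- upper bound
    have h1 : (1 : ℝ) ≤ max 1 (max (1 + 2 * k₁ * k₂ ^ 2 / k₃) (2 * k₁ / k₃)) := le_max_left _ _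
    have h2 : 1 + 2 * k₁ * k₂ ^ 2 / k₃ ≤ max 1 (max (1 + 2 * k₁ * k₂ ^ 2 / k₃) (2 * k₁ / k₃)) :=
      le_trans (le_max_left _ _) (le_max_right _ _)
    have h3 : 2 * k₁ / k₃ ≤ max 1 (max (1 + 2 * k₁ * k₂ ^ 2 / k₃) (2 * k₁ / k₃)) :=
      le_trans (le_max_right _ _) (le_max_right _ _)
    have key : (k₁ / k₃) * (γ + a) ^ 2
        ≤ (2 * k₁ * k₂ ^ 2 / k₃) * δ ^ 2 + (2 * k₁ / k₃) * γ ^ 2 := by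
      rw [div_mul_eq_mul_div, div_mul_eq_mul_div, div_mul_eq_mul_div, ← add_div,
        div_le_div_iff₀ hk₃ hk₃]
      nlinarith [mul_nonneg (mul_nonneg hk₁.le hk₃.le) (sq_nonneg (γ - a)),
        mul_nonneg (mul_nonneg hk₁.le hk₃.le) (sub_nonneg.mpr ha)]
    linarith [key, mul_le_mul_of_nonneg_right h2 (sq_nonneg δ),
      mul_le_mul_of_nonneg_right h3 (sq_nonneg γ),
      mul_le_mul_of_nonneg_right h1 (sq_nonneg ρ)]
end
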